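/- For every positive integer k, the normalized map (1/k)·ρ_k is a multiplicative map on ℚ[ℚ/ℤ]: for all x, y one has ρ_k(x)·ρ_k(y) = k·ρ_k(x·y), where multiplication is the convolution product of the group algebra. -/

import Mathlib

abbrev QZ := AddCircle (1 : ℚ)
abbrev QQZ := AddMonoidAlgebra ℚ QZ

noncomputable def rho (k : ℕ) (x : QQZ) : QQZ :=
  Finsupp.sum x.coeff fun a c => c • ∑ᶠ b ∈ {b : QZ | k • b = a}, AddMonoidAlgebra.single b (1 : ℚ)

namespace RhoAux

lemma coe_eq_coe (r s : ℚ) : (r : QZ) = s ↔ ∃ n : ℤ, (n : ℚ) = s - r := by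
  constructor
  · intro h
    have h2 : ((s - r : ℚ) : QZ) = 0 := by
      have : (s:QZ) - r = 0 := by rw [← h]; simp
      exact this
    obtain ⟨n, hn⟩ := (AddCircle.coe_eq_zero_iff (1:ℚ)).mp h2
    exact ⟨n, by simpa using hn⟩
  · rintro ⟨n, hn⟩
    have : ((s - r : ℚ) : QZ) = 0 := by
      apply (AddCircle.coe_eq_zero_iff (1:ℚ)).mpr
      exact ⟨n, by simpa using hn⟩
    have h2 : (s:QZ) - r = 0 := this
    linear_combination (norm := abel) -h2

noncomputable def u (r : ℚ) : QQZ := AddMonoidAlgebra.single ((r : QZ)) 1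

lemma u_mul (r s : ℚ) : u r * u s = u (r + s) := by
  unfold u
  rw [AddMonoidAlgebra.single_mul_single]
  norm_num

lemma u_int (r : ℚ) (n : ℤ) : u (r + n) = u r := by
  unfold u
  congr 1
  rw [coe_eq_coe]
  exact ⟨-n, by push_cast; ring⟩

noncomputable def T (k : ℕ) (a : QZ) : QQZ :=
  ∑ᶠ b ∈ {b : QZ | k • b = a}, AddMonoidAlgebra.single b (1 : ℚ)

lemma sol_set (k : ℕ) (hk : 0 < k) (q : ℚ) :
    {b : QZ | k • b = (q : QZ)} =
      ↑((Finset.range k).image (fun i : ℕ => (((q + i) / k : ℚ) : QZ))) := by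
  have hkQ : (k : ℚ) ≠ 0 := by exact_mod_cast hk.ne'
  have hkZ : (k : ℤ) ≠ 0 := by exact_mod_cast hk.ne'
  have hkZ' : (0:ℤ) < k := by exact_mod_cast hk
  ext b
  simp only [Finset.coe_image, Finset.coe_range, Set.mem_image, Set.mem_Iio, Set.mem_setOf_eq]
  constructor
  · intro hb
    obtain ⟨r, rfl⟩ := QuotientAddGroup.mk_surjective b
    have hb' : ((k • r : ℚ) : QZ) = (q : QZ) := hb
    rw [coe_eq_coe] at hb'
    obtain ⟨n, hn⟩ := hb'
    have hkr : (k:ℚ) * r = q - n := by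
      have : (k • r : ℚ) = q - n := by linarith [hn]
      simpa [nsmul_eq_mul] using this
    have h1 : (0:ℤ) ≤ (-n) % k := Int.emod_nonneg _ hkZ
    have h2 : (-n) % k < k := Int.emod_lt_of_pos _ hkZ'
    refine ⟨((-n) % k).toNat, by omega, ?_⟩
    rw [coe_eq_coe]
    refine ⟨(-n) / k, ?_⟩
    have hval : ((((-n) % k).toNat : ℕ) : ℚ) = (((-n) % k : ℤ) : ℚ) := by
      exact_mod_cast congrArg (fun z : ℤ => (z : ℚ)) (Int.toNat_of_nonneg h1)
    have hdiv : (k:ℤ) * ((-n) / k) + (-n) % k = -n := Int.mul_ediv_add_emod _ _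
    have hdivQ : (k:ℚ) * (((-n) / k : ℤ) : ℚ) + (((-n) % k : ℤ) : ℚ) = -n := by
      exact_mod_cast congrArg (fun z : ℤ => (z : ℚ)) hdiv
    field_simp
    rw [hval]
    nlinarith [hdivQ, hkr]
  · rintro ⟨i, hi, rfl⟩
    show (((k : ℕ) • ((q + i)/k) : ℚ) : QZ) = (q : QZ)
    rw [coe_eq_coe]
    refine ⟨-i, ?_⟩
    push_cast
    simp only [nsmul_eq_mul]
    field_simp
    ring

lemma inj_aux (k : ℕ) (hk : 0 < k) (q : ℚ) : ∀ i ∈ Finset.range k, ∀ j ∈ Finset.range k,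
    (((q + i) / k : ℚ) : QZ) = (((q + j) / k : ℚ) : QZ) → i = j := by
  intro i hi j hj h
  rw [coe_eq_coe] at h
  obtain ⟨n, hn⟩ := h
  simp only [Finset.mem_range] at hi hj
  have hkQ : (k : ℚ) ≠ 0 := by exact_mod_cast hk.ne'
  have : (n : ℚ) * k = (j : ℚ) - i := by field_simp at hn; linarith
  have hz : n * k = (j : ℤ) - i := by exact_mod_cast this
  have hdvd : (k:ℤ) ∣ (j:ℤ) - i := ⟨n, by linarith⟩
  have habs : |(j:ℤ) - i| < k := by rw [abs_lt]; omega
  have := Int.eq_zero_of_abs_lt_dvd hdvd habs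
  omega

lemma T_eq (k : ℕ) (hk : 0 < k) (q : ℚ) :
    T k ((q : ℚ) : QZ) = ∑ i ∈ Finset.range k, u ((q + i) / k) := by
  unfold T
  rw [sol_set k hk q, finsum_mem_coe_finset, Finset.sum_image (inj_aux k hk q)]
  rfl

lemma shift_sum (k : ℕ) (hk : 0 < k) (F : ℕ → QQZ) (hF : ∀ n, F (n + k) = F n) (i : ℕ) :
    ∑ j ∈ Finset.range k, F (i + j) = ∑ j ∈ Finset.range k, F j := by
  induction i with
  | zero => simp
  | succ i ih =>
    have e1 : ∀ j : ℕ, F (i + 1 + j) = F (i + (j + 1)) := fun j => by ring_nf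
    have step : ∑ j ∈ Finset.range k, F (i + 1 + j)
        = ∑ j ∈ Finset.range (k + 1), F (i + j) - F (i + 0) := by
      rw [Finset.sum_range_succ' (fun j => F (i + j)) k]
      simp only [e1]
      abel
    rw [step, Finset.sum_range_succ, hF]
    simp only [Nat.add_zero]
    rw [add_sub_cancel_right, ih]

lemma T_mul (k : ℕ) (hk : 0 < k) (a a' : QZ) : T k a * T k a' = (k : ℚ) • T k (a + a') := by
  have hkQ : (k : ℚ) ≠ 0 := by exact_mod_cast hk.ne'
  obtain ⟨q, rfl⟩ := QuotientAddGroup.mk_surjective a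
  obtain ⟨q', rfl⟩ := QuotientAddGroup.mk_surjective a'
  have hadd : ((q : ℚ) : QZ) + ((q' : ℚ) : QZ) = ((q + q' : ℚ) : QZ) := rfl
  rw [hadd, T_eq k hk, T_eq k hk, T_eq k hk, Finset.sum_mul_sum]
  set F : ℕ → QQZ := fun n => u ((q + q' + n) / k) with hFdef
  have hF : ∀ n, F (n + k) = F n := by
    intro n
    simp only [hFdef]
    have : (q + q' + ↑(n + k)) / k = (q + q' + n) / k + (1:ℤ) := by
      push_cast; field_simp; ring
    rw [this, u_int]
  have key : ∀ i ∈ Finset.range k, ∑ j ∈ Finset.range k, u ((q + i)/k) * u ((q' + j)/k)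
      = ∑ j ∈ Finset.range k, F j := by
    intro i _
    have e : ∀ j : ℕ, u ((q + i)/k) * u ((q' + j)/k) = F (i + j) := by
      intro j
      rw [u_mul]
      simp only [hFdef]
      congr 1
      push_cast; field_simp; ring
    rw [Finset.sum_congr rfl fun j _ => e j, shift_sum k hk F hF]
  rw [Finset.sum_congr rfl key, Finset.sum_const, Finset.card_range]
  have : ∑ j ∈ Finset.range k, F j = ∑ i ∈ Finset.range k, u ((q + q' + i) / k) := rfl
  rw [← Nat.cast_smul_eq_nsmul ℚ]

lemma rho_eq (k : ℕ) (x : QQZ) : rho k x = Finsupp.sum x.coeff fun a c => c • T k a := rfl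

lemma rho_single (k : ℕ) (a : QZ) (c : ℚ) : rho k (AddMonoidAlgebra.single a c) = c • T k a := by
  rw [rho_eq, AddMonoidAlgebra.coeff_single]
  exact Finsupp.sum_single_index (by simp)

lemma rho_add (k : ℕ) (x y : QQZ) : rho k (x + y) = rho k x + rho k y := by
  rw [rho_eq, rho_eq, rho_eq, AddMonoidAlgebra.coeff_add]
  exact Finsupp.sum_add_index (fun a _ => by simp) (fun a _ c c' => add_smul c c' (T k a))

lemma rho_zero (k : ℕ) : rho k 0 = 0 := by rw [rho_eq]; simp

end RhoAux

open RhoAux in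
/-- `(1/k)·ρ_k` is multiplicative on ℚ[ℚ/ℤ]:
`ρ_k(x)·ρ_k(y) = k·ρ_k(x·y)` for the convolution product. -/
theorem rho_multiplicative (k : ℕ) (hk : 0 < k) :
    ∀ x y : QQZ, rho k x * rho k y = (k : ℚ) • rho k (x * y) := by
  intro x y
  induction x using AddMonoidAlgebra.induction_linear with
  | zero => simp [rho_zero]
  | add x x' hx hx' => rw [rho_add, add_mul, hx, hx', add_mul, rho_add, smul_add]
  | single a c =>
    induction y using AddMonoidAlgebra.induction_linear with
    | zero => simp [rho_zero]
    | add y y' hy hy' => rw [rho_add, mul_add, hy, hy', mul_add, rho_add, smul_add]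
    | single a' c' =>
      rw [rho_single, rho_single, smul_mul_assoc, mul_smul_comm, T_mul k hk,
        AddMonoidAlgebra.single_mul_single, rho_single]
      simp only [smul_smul]
      congr 1
      ring
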